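/- Let λ,ρ : I → I be bijections and E a λ,ρ-weakly commutative GPEA. The kite structure K_I^{λ,ρ}(E) on the disjoint union E^I ⊎ (Ē)^I, with 0 = ⟨0_j⟩, 1 = ⟨0̄_i⟩ and partial addition defined by rules (I)–(IV), is a pseudo effect algebra. -/

import Mathlib

open scoped Classical

/-- A generalized pseudo effect algebra (GPEA): a partial algebra `(E; +, 0)`
satisfying (GP1)-(GP5). The partial addition is modelled by an `Option`-valued
operation: `add a b = some c` means `a + b` is defined and equals `c`. -/
structure GPEA (E : Type) where
  add : E → E → Option E
  zero : E
  assoc_ex : ∀ a b c : E,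
    (∃ ab, add a b = some ab ∧ (add ab c).isSome) ↔
    (∃ bc, add b c = some bc ∧ (add a bc).isSome)
  assoc_eq : ∀ a b c ab bc : E, add a b = some ab → add b c = some bc →
    add ab c = add a bc
  exch : ∀ a b ab : E, add a b = some ab →
    (∃ d, add d a = some ab) ∧ (∃ e, add b e = some ab)
  cancel_left : ∀ a b c x : E, add a b = some x → add a c = some x → b = c
  cancel_right : ∀ a b c x : E, add b a = some x → add c a = some x → b = c
  pos : ∀ a b : E, add a b = some zero → a = zero ∧ b = zero
  add_zero : ∀ a : E, add a zero = some a
  zero_add : ∀ a : E, add zero a = some a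

/-- The induced order of a GPEA: `a ≤ b` iff `∃ c, a + c = b`. -/
def GPEA.le {E : Type} (G : GPEA E) (a b : E) : Prop := ∃ c, G.add a c = some b

/-- `b ⊖ a` : the element `c` with `c + a = b` (if it exists, else `0`). -/
noncomputable def GPEA.lsub {E : Type} (G : GPEA E) (b a : E) : E :=
  if h : ∃ c, G.add c a = some b then h.choose else G.zero

/-- `a ⊘ b` : the element `c` with `a + c = b` (if it exists, else `0`). -/
noncomputable def GPEA.rsub {E : Type} (G : GPEA E) (a b : E) : E :=
  if h : ∃ c, G.add a c = some b then h.choose else G.zero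

/-- A GPEA is directed if any two elements have a common upper bound. -/
def GPEA.directed {E : Type} (G : GPEA E) : Prop :=
  ∀ a b : E, ∃ c, G.le a c ∧ G.le b c

/-- A pseudo effect algebra (PEA): a partial algebra `(E; +, 0, 1)`
satisfying axioms (i)-(iv). -/
structure PEA (E : Type) where
  add : E → E → Option E
  zero : E
  one : E
  assoc_ex : ∀ a b c : E,
    (∃ ab, add a b = some ab ∧ (add ab c).isSome) ↔
    (∃ bc, add b c = some bc ∧ (add a bc).isSome)
  assoc_eq : ∀ a b c ab bc : E, add a b = some ab → add b c = some bc →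
    add ab c = add a bc
  compl_right : ∀ a : E, ∃! d, add a d = some one
  compl_left : ∀ a : E, ∃! e, add e a = some one
  exch : ∀ a b ab : E, add a b = some ab →
    (∃ d, add d a = some ab) ∧ (∃ e, add b e = some ab)
  one_left : ∀ a : E, (add one a).isSome → a = zero
  one_right : ∀ a : E, (add a one).isSome → a = zero

/-- The induced order of a PEA. -/
def PEA.le {E : Type} (P : PEA E) (a b : E) : Prop := ∃ c, P.add a c = some b

/-- `a⁻` : the unique element with `a⁻ + a = 1`. -/
noncomputable def PEA.negL {E : Type} (P : PEA E) (a : E) : E :=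
  (P.compl_left a).choose

/-- `a∼` : the unique element with `a + a∼ = 1`. -/
noncomputable def PEA.negR {E : Type} (P : PEA E) (a : E) : E :=
  (P.compl_right a).choose

/-- `E` is `λ,ρ`-weakly commutative. -/
def GPEA.lrWC {E I : Type} (G : GPEA E) (l r : I ≃ I) : Prop :=
  (∀ f a : I → E, ∀ i : I,
    ((G.add (f (r.symm i)) (a i)).isSome ↔ (G.add (a i) (f (l.symm i))).isSome)) ∧
  (∀ g b : I → E, ∀ i : I,
    ((G.add (g (l.symm i)) (b i)).isSome ↔ (G.add (b i) (g (r.symm i))).isSome))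

/-- The partial addition of the kite `K_I^{λ,ρ}(E)`: the carrier is
`(I → E) ⊕ (I → E)`, `Sum.inl` being the lower copy `E^I` and `Sum.inr` the
upper copy `(Ē)^I`; rules (I)-(IV). -/
noncomputable def kiteAdd {E I : Type} (G : GPEA E) (l r : I ≃ I) :
    (I → E) ⊕ (I → E) → (I → E) ⊕ (I → E) → Option ((I → E) ⊕ (I → E))
  | Sum.inr _, Sum.inr _ => none
  | Sum.inr a, Sum.inl f =>
      if _ : ∀ i, G.le (f (r.symm i)) (a i) then
        some (Sum.inr fun i => G.rsub (f (r.symm i)) (a i))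
      else none
  | Sum.inl f, Sum.inr a =>
      if _ : ∀ i, G.le (f (l.symm i)) (a i) then
        some (Sum.inr fun i => G.lsub (a i) (f (l.symm i)))
      else none
  | Sum.inl f, Sum.inl g =>
      if h : ∀ j, (G.add (f j) (g j)).isSome then
        some (Sum.inl fun j => (G.add (f j) (g j)).get (h j))
      else none

/-- The bottom element `0 = ⟨0_j⟩` of the kite. -/
def kiteZero (E I : Type) (G : GPEA E) : (I → E) ⊕ (I → E) :=
  Sum.inl fun _ => G.zero

/-- The top element `1 = ⟨0̄_i⟩` of the kite. -/
def kiteOne (E I : Type) (G : GPEA E) : (I → E) ⊕ (I → E) :=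
  Sum.inr fun _ => G.zero

/-- Riesz decomposition property RDP for a GPEA. -/
def GPEA.RDP {E : Type} (G : GPEA E) : Prop :=
  ∀ a1 a2 b1 b2 x : E, G.add a1 a2 = some x → G.add b1 b2 = some x →
    ∃ c11 c12 c21 c22 : E, G.add c11 c12 = some a1 ∧ G.add c21 c22 = some a2 ∧
      G.add c11 c21 = some b1 ∧ G.add c12 c22 = some b2

/-- RDP₁ for a GPEA. -/
def GPEA.RDP1 {E : Type} (G : GPEA E) : Prop :=
  ∀ a1 a2 b1 b2 x : E, G.add a1 a2 = some x → G.add b1 b2 = some x →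
    ∃ c11 c12 c21 c22 : E, G.add c11 c12 = some a1 ∧ G.add c21 c22 = some a2 ∧
      G.add c11 c21 = some b1 ∧ G.add c12 c22 = some b2 ∧
      (∀ u v : E, G.le u c12 → G.le v c21 → G.add u v = G.add v u)

/-- RDP₂ for a GPEA (`c₁₂ ∧ c₂₁ = 0`). -/
def GPEA.RDP2 {E : Type} (G : GPEA E) : Prop :=
  ∀ a1 a2 b1 b2 x : E, G.add a1 a2 = some x → G.add b1 b2 = some x →
    ∃ c11 c12 c21 c22 : E, G.add c11 c12 = some a1 ∧ G.add c21 c22 = some a2 ∧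
      G.add c11 c21 = some b1 ∧ G.add c12 c22 = some b2 ∧
      (∀ z : E, G.le z c12 → G.le z c21 → z = G.zero)

/-- RDP₀ for a GPEA. -/
def GPEA.RDP0 {E : Type} (G : GPEA E) : Prop :=
  ∀ a b c x : E, G.add b c = some x → G.le a x →
    ∃ b1 c1 : E, G.le b1 b ∧ G.le c1 c ∧ G.add b1 c1 = some a

/-- RDP for a PEA. -/
def PEA.RDP {E : Type} (P : PEA E) : Prop :=
  ∀ a1 a2 b1 b2 x : E, P.add a1 a2 = some x → P.add b1 b2 = some x →
    ∃ c11 c12 c21 c22 : E, P.add c11 c12 = some a1 ∧ P.add c21 c22 = some a2 ∧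
      P.add c11 c21 = some b1 ∧ P.add c12 c22 = some b2

/-- RDP₁ for a PEA. -/
def PEA.RDP1 {E : Type} (P : PEA E) : Prop :=
  ∀ a1 a2 b1 b2 x : E, P.add a1 a2 = some x → P.add b1 b2 = some x →
    ∃ c11 c12 c21 c22 : E, P.add c11 c12 = some a1 ∧ P.add c21 c22 = some a2 ∧
      P.add c11 c21 = some b1 ∧ P.add c12 c22 = some b2 ∧
      (∀ u v : E, P.le u c12 → P.le v c21 → P.add u v = P.add v u)

/-- RDP₂ for a PEA. -/
def PEA.RDP2 {E : Type} (P : PEA E) : Prop :=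
  ∀ a1 a2 b1 b2 x : E, P.add a1 a2 = some x → P.add b1 b2 = some x →
    ∃ c11 c12 c21 c22 : E, P.add c11 c12 = some a1 ∧ P.add c21 c22 = some a2 ∧
      P.add c11 c21 = some b1 ∧ P.add c12 c22 = some b2 ∧
      (∀ z : E, P.le z c12 → P.le z c21 → z = P.zero)

/-- RDP₀ for a PEA. -/
def PEA.RDP0 {E : Type} (P : PEA E) : Prop :=
  ∀ a b c x : E, P.add b c = some x → P.le a x →
    ∃ b1 c1 : E, P.le b1 b ∧ P.le c1 c ∧ P.add b1 c1 = some a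

/-- Ideal of a GPEA. -/
def GPEA.isIdeal {E : Type} (G : GPEA E) (A : Set E) : Prop :=
  G.zero ∈ A ∧ (∀ x y z : E, x ∈ A → y ∈ A → G.add x y = some z → z ∈ A) ∧
  (∀ x y : E, G.le x y → y ∈ A → x ∈ A)

/-- Normal ideal of a GPEA: `x + A = A + x` for all `x`. -/
def GPEA.isNormalIdeal {E : Type} (G : GPEA E) (A : Set E) : Prop :=
  G.isIdeal A ∧
  ∀ x : E, {z | ∃ y ∈ A, G.add x y = some z} = {z | ∃ y ∈ A, G.add y x = some z}

/-- Ideal of a PEA. -/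
def PEA.isIdeal {E : Type} (P : PEA E) (A : Set E) : Prop :=
  P.zero ∈ A ∧ (∀ x y z : E, x ∈ A → y ∈ A → P.add x y = some z → z ∈ A) ∧
  (∀ x y : E, P.le x y → y ∈ A → x ∈ A)

/-- Normal ideal of a PEA. -/
def PEA.isNormalIdeal {E : Type} (P : PEA E) (A : Set E) : Prop :=
  P.isIdeal A ∧
  ∀ x : E, {z | ∃ y ∈ A, P.add x y = some z} = {z | ∃ y ∈ A, P.add y x = some z}

/-- Maximal ideal of a PEA: proper and not properly contained in any proper ideal. -/
def PEA.isMaximalIdeal {E : Type} (P : PEA E) (A : Set E) : Prop :=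
  P.isIdeal A ∧ A ≠ Set.univ ∧
  ∀ B : Set E, P.isIdeal B → A ⊆ B → B = A ∨ B = Set.univ

/-- `i` and `j` are connected: `(ρ∘λ⁻¹)^m(i) = j` or `(λ∘ρ⁻¹)^m(i) = j` for some `m ≥ 0`. -/
def connected {I : Type} (l r : I ≃ I) (i j : I) : Prop :=
  ∃ m : ℕ, (fun x => r (l.symm x))^[m] i = j ∨ (fun x => l (r.symm x))^[m] i = j

section Helpers

theorem option_ext' {α : Type _} {o o' : Option α}
    (h : ∀ a, o = some a ↔ o' = some a) : o = o' := by
  cases o with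
  | none =>
    cases o' with
    | none => rfl
    | some a => exact absurd ((h a).mpr rfl) (by simp)
  | some a => exact ((h a).mp rfl).symm

namespace GPEA

variable {E : Type} (G : GPEA E)

theorem lsub_eq {a b c : E} (h : G.add c a = some b) : G.lsub b a = c := by
  have hex : ∃ c, G.add c a = some b := ⟨c, h⟩
  rw [GPEA.lsub, dif_pos hex]
  exact G.cancel_right a _ c b hex.choose_spec h

theorem rsub_eq {a b c : E} (h : G.add a c = some b) : G.rsub a b = c := by
  have hex : ∃ c, G.add a c = some b := ⟨c, h⟩
  rw [GPEA.rsub, dif_pos hex]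
  exact G.cancel_left a _ c b hex.choose_spec h

theorem lsub_add {a b : E} (h : G.le a b) : G.add (G.lsub b a) a = some b := by
  obtain ⟨c, hc⟩ := h
  obtain ⟨⟨d, hd⟩, -⟩ := G.exch a c b hc
  have hex : ∃ c, G.add c a = some b := ⟨d, hd⟩
  rw [GPEA.lsub, dif_pos hex]
  exact hex.choose_spec

theorem add_rsub {a b : E} (h : G.le a b) : G.add a (G.rsub a b) = some b := by
  have hex : ∃ c, G.add a c = some b := h
  rw [GPEA.rsub, dif_pos hex]
  exact hex.choose_spec

theorem assoc1 {a b c ab x : E} (h1 : G.add a b = some ab)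
    (h2 : G.add ab c = some x) :
    ∃ bc, G.add b c = some bc ∧ G.add a bc = some x := by
  obtain ⟨bc, hbc, -⟩ := (G.assoc_ex a b c).mp ⟨ab, h1, by rw [h2]; rfl⟩
  exact ⟨bc, hbc, by rw [← G.assoc_eq a b c ab bc h1 hbc, h2]⟩

theorem assoc2 {a b c bc x : E} (h1 : G.add b c = some bc)
    (h2 : G.add a bc = some x) :
    ∃ ab, G.add a b = some ab ∧ G.add ab c = some x := by
  obtain ⟨ab, hab, -⟩ := (G.assoc_ex a b c).mpr ⟨bc, h1, by rw [h2]; rfl⟩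
  exact ⟨ab, hab, by rw [G.assoc_eq a b c ab bc hab h1, h2]⟩

end GPEA

variable {E I : Type} (G : GPEA E) (l r : I ≃ I)

theorem kadd_ll {f g : I → E} {z : (I → E) ⊕ (I → E)} :
    kiteAdd G l r (Sum.inl f) (Sum.inl g) = some z ↔
      ∃ s : I → E, z = Sum.inl s ∧ ∀ j, G.add (f j) (g j) = some (s j) := by
  show (if h : ∀ j, (G.add (f j) (g j)).isSome then
      some (Sum.inl fun j => (G.add (f j) (g j)).get (h j)) else none) = some z ↔ _
  split_ifs with h
  · constructor
    · intro h'
      injection h' with h'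
      exact ⟨_, h'.symm, fun j => (Option.some_get (h j)).symm⟩
    · rintro ⟨s, rfl, hs⟩
      have : (fun j => (G.add (f j) (g j)).get (h j)) = s := by
        funext j
        exact Option.some_injective _ (by rw [Option.some_get]; exact hs j)
      rw [this]
  · constructor
    · intro h'; cases h'
    · rintro ⟨s, rfl, hs⟩
      exact absurd (fun j => by rw [hs j]; rfl) h

theorem kadd_lr {f a : I → E} {z : (I → E) ⊕ (I → E)} :
    kiteAdd G l r (Sum.inl f) (Sum.inr a) = some z ↔
      ∃ c : I → E, z = Sum.inr c ∧ ∀ i, G.add (c i) (f (l.symm i)) = some (a i) := by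
  show (if _ : ∀ i, G.le (f (l.symm i)) (a i) then
      some (Sum.inr fun i => G.lsub (a i) (f (l.symm i))) else none) = some z ↔ _
  split_ifs with h
  · constructor
    · intro h'
      injection h' with h'
      exact ⟨_, h'.symm, fun i => G.lsub_add (h i)⟩
    · rintro ⟨c, rfl, hc⟩
      have : (fun i => G.lsub (a i) (f (l.symm i))) = c :=
        funext fun i => G.lsub_eq (hc i)
      rw [this]
  · constructor
    · intro h'; cases h'
    · rintro ⟨c, rfl, hc⟩
      refine absurd (fun i => ?_) h
      obtain ⟨-, e, he⟩ := G.exch _ _ _ (hc i)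
      exact ⟨e, he⟩

theorem kadd_rl {a f : I → E} {z : (I → E) ⊕ (I → E)} :
    kiteAdd G l r (Sum.inr a) (Sum.inl f) = some z ↔
      ∃ c : I → E, z = Sum.inr c ∧ ∀ i, G.add (f (r.symm i)) (c i) = some (a i) := by
  show (if _ : ∀ i, G.le (f (r.symm i)) (a i) then
      some (Sum.inr fun i => G.rsub (f (r.symm i)) (a i)) else none) = some z ↔ _
  split_ifs with h
  · constructor
    · intro h'
      injection h' with h'
      exact ⟨_, h'.symm, fun i => G.add_rsub (h i)⟩
    · rintro ⟨c, rfl, hc⟩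
      have : (fun i => G.rsub (f (r.symm i)) (a i)) = c :=
        funext fun i => G.rsub_eq (hc i)
      rw [this]
  · constructor
    · intro h'; cases h'
    · rintro ⟨c, rfl, hc⟩
      exact absurd (fun i => ⟨c i, hc i⟩) h

theorem kadd_rr {a b : I → E} :
    kiteAdd G l r (Sum.inr a) (Sum.inr b) = none := rfl

end Helpers

/-- For bijections `λ,ρ : I → I` and a `λ,ρ`-weakly commutative
GPEA `E`, the kite structure `K_I^{λ,ρ}(E)` on `E^I ⊎ (Ē)^I` with `0 = ⟨0_j⟩`,
`1 = ⟨0̄_i⟩` and addition rules (I)-(IV) is a pseudo effect algebra. -/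
theorem kite_is_pea {E I : Type} (G : GPEA E) (l r : I ≃ I)
    (hwc : G.lrWC l r) :
    ∃ P : PEA ((I → E) ⊕ (I → E)),
      P.add = kiteAdd G l r ∧ P.zero = kiteZero E I G ∧ P.one = kiteOne E I G := by
  refine ⟨⟨kiteAdd G l r, kiteZero E I G, kiteOne E I G,
      ?_, ?_, ?_, ?_, ?_, ?_, ?_⟩, rfl, rfl, rfl⟩
  -- associativity (existence)
  · rintro (f | a) (g | b) (h | c) <;> simp only [Option.isSome_iff_exists]
    -- LLL
    · constructor
      · rintro ⟨ab, hab, w, hw⟩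
        obtain ⟨s, rfl, hs⟩ := (kadd_ll G l r).mp hab
        obtain ⟨t, rfl, ht⟩ := (kadd_ll G l r).mp hw
        choose u h1 h2 using fun j => G.assoc1 (hs j) (ht j)
        exact ⟨Sum.inl u, (kadd_ll G l r).mpr ⟨u, rfl, h1⟩,
          Sum.inl t, (kadd_ll G l r).mpr ⟨t, rfl, h2⟩⟩
      · rintro ⟨bc, hbc, w, hw⟩
        obtain ⟨s, rfl, hs⟩ := (kadd_ll G l r).mp hbc
        obtain ⟨t, rfl, ht⟩ := (kadd_ll G l r).mp hw
        choose u h1 h2 using fun j => G.assoc2 (hs j) (ht j)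
        exact ⟨Sum.inl u, (kadd_ll G l r).mpr ⟨u, rfl, h1⟩,
          Sum.inl t, (kadd_ll G l r).mpr ⟨t, rfl, h2⟩⟩
    -- LLR
    · constructor
      · rintro ⟨ab, hab, w, hw⟩
        obtain ⟨s, rfl, hs⟩ := (kadd_ll G l r).mp hab
        obtain ⟨t, rfl, ht⟩ := (kadd_lr G l r).mp hw
        choose u h1 h2 using fun i => G.assoc2 (hs (l.symm i)) (ht i)
        exact ⟨Sum.inr u, (kadd_lr G l r).mpr ⟨u, rfl, h2⟩,
          Sum.inr t, (kadd_lr G l r).mpr ⟨t, rfl, h1⟩⟩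
      · rintro ⟨bc, hbc, w, hw⟩
        obtain ⟨u, rfl, hu⟩ := (kadd_lr G l r).mp hbc
        obtain ⟨t, rfl, ht⟩ := (kadd_lr G l r).mp hw
        choose v h1 h2 using fun i => G.assoc1 (ht i) (hu i)
        refine ⟨Sum.inl fun j => v (l j),
          (kadd_ll G l r).mpr ⟨_, rfl, fun j => by simpa using h1 (l j)⟩,
          Sum.inr t, (kadd_lr G l r).mpr ⟨t, rfl, fun i => by simpa using h2 i⟩⟩
    -- LRL
    · constructor
      · rintro ⟨ab, hab, w, hw⟩
        obtain ⟨u, rfl, hu⟩ := (kadd_lr G l r).mp hab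
        obtain ⟨t, rfl, ht⟩ := (kadd_rl G l r).mp hw
        choose v h1 h2 using fun i => G.assoc1 (ht i) (hu i)
        exact ⟨Sum.inr v, (kadd_rl G l r).mpr ⟨v, rfl, h2⟩,
          Sum.inr t, (kadd_lr G l r).mpr ⟨t, rfl, h1⟩⟩
      · rintro ⟨bc, hbc, w, hw⟩
        obtain ⟨u, rfl, hu⟩ := (kadd_rl G l r).mp hbc
        obtain ⟨t, rfl, ht⟩ := (kadd_lr G l r).mp hw
        choose v h1 h2 using fun i => G.assoc2 (ht i) (hu i)
        exact ⟨Sum.inr v, (kadd_lr G l r).mpr ⟨v, rfl, h2⟩,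
          Sum.inr t, (kadd_rl G l r).mpr ⟨t, rfl, h1⟩⟩
    -- LRR
    · constructor
      · rintro ⟨ab, hab, w, hw⟩
        obtain ⟨u, rfl, -⟩ := (kadd_lr G l r).mp hab
        rw [kadd_rr G l r] at hw
        exact nomatch hw
      · rintro ⟨bc, hbc, -⟩
        rw [kadd_rr G l r] at hbc
        exact nomatch hbc
    -- RLL
    · constructor
      · rintro ⟨ab, hab, w, hw⟩
        obtain ⟨u, rfl, hu⟩ := (kadd_rl G l r).mp hab
        obtain ⟨t, rfl, ht⟩ := (kadd_rl G l r).mp hw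
        choose v h1 h2 using fun i => G.assoc2 (ht i) (hu i)
        refine ⟨Sum.inl fun j => v (r j),
          (kadd_ll G l r).mpr ⟨_, rfl, fun j => by simpa using h1 (r j)⟩,
          Sum.inr t, (kadd_rl G l r).mpr ⟨t, rfl, fun i => by simpa using h2 i⟩⟩
      · rintro ⟨bc, hbc, w, hw⟩
        obtain ⟨s, rfl, hs⟩ := (kadd_ll G l r).mp hbc
        obtain ⟨t, rfl, ht⟩ := (kadd_rl G l r).mp hw
        choose v h1 h2 using fun i => G.assoc1 (hs (r.symm i)) (ht i)
        exact ⟨Sum.inr v, (kadd_rl G l r).mpr ⟨v, rfl, h2⟩,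
          Sum.inr t, (kadd_rl G l r).mpr ⟨t, rfl, h1⟩⟩
    -- RLR
    · constructor
      · rintro ⟨ab, hab, w, hw⟩
        obtain ⟨u, rfl, -⟩ := (kadd_rl G l r).mp hab
        rw [kadd_rr G l r] at hw
        exact nomatch hw
      · rintro ⟨bc, hbc, w, hw⟩
        obtain ⟨u, rfl, -⟩ := (kadd_lr G l r).mp hbc
        rw [kadd_rr G l r] at hw
        exact nomatch hw
    -- RRL
    · constructor
      · rintro ⟨ab, hab, -⟩
        rw [kadd_rr G l r] at hab
        exact nomatch hab
      · rintro ⟨bc, hbc, w, hw⟩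
        obtain ⟨u, rfl, -⟩ := (kadd_rl G l r).mp hbc
        rw [kadd_rr G l r] at hw
        exact nomatch hw
    -- RRR
    · constructor
      · rintro ⟨ab, hab, -⟩
        rw [kadd_rr G l r] at hab
        exact nomatch hab
      · rintro ⟨bc, hbc, -⟩
        rw [kadd_rr G l r] at hbc
        exact nomatch hbc
  -- associativity (equality)
  · rintro (f | a) (g | b) (h | c) ab bc h1 h2
    -- LLL
    · obtain ⟨s, rfl, hs⟩ := (kadd_ll G l r).mp h1
      obtain ⟨t, rfl, ht⟩ := (kadd_ll G l r).mp h2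
      have hpt : ∀ j, G.add (s j) (h j) = G.add (f j) (t j) :=
        fun j => G.assoc_eq _ _ _ _ _ (hs j) (ht j)
      apply option_ext'
      intro z
      rw [kadd_ll G l r, kadd_ll G l r]
      constructor
      · rintro ⟨w, rfl, hw⟩
        exact ⟨w, rfl, fun j => by rw [← hpt j]; exact hw j⟩
      · rintro ⟨w, rfl, hw⟩
        exact ⟨w, rfl, fun j => by rw [hpt j]; exact hw j⟩
    -- LLR
    · obtain ⟨s, rfl, hs⟩ := (kadd_ll G l r).mp h1
      obtain ⟨u, rfl, hu⟩ := (kadd_lr G l r).mp h2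
      apply option_ext'
      intro z
      rw [kadd_lr G l r, kadd_lr G l r]
      constructor
      · rintro ⟨t, rfl, ht⟩
        refine ⟨t, rfl, fun i => ?_⟩
        obtain ⟨w, hw1, hw2⟩ := G.assoc2 (hs (l.symm i)) (ht i)
        rwa [G.cancel_right _ w (u i) (c i) hw2 (hu i)] at hw1
      · rintro ⟨t, rfl, ht⟩
        refine ⟨t, rfl, fun i => ?_⟩
        rw [← G.assoc_eq (t i) (f (l.symm i)) (g (l.symm i)) (u i) (s (l.symm i))
          (ht i) (hs (l.symm i))]
        exact hu i
    -- LRL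
    · obtain ⟨u, rfl, hu⟩ := (kadd_lr G l r).mp h1
      obtain ⟨v, rfl, hv⟩ := (kadd_rl G l r).mp h2
      apply option_ext'
      intro z
      rw [kadd_rl G l r, kadd_lr G l r]
      constructor
      · rintro ⟨t, rfl, ht⟩
        refine ⟨t, rfl, fun i => ?_⟩
        obtain ⟨w, hw1, hw2⟩ := G.assoc1 (ht i) (hu i)
        rwa [G.cancel_left _ w (v i) (b i) hw2 (hv i)] at hw1
      · rintro ⟨t, rfl, ht⟩
        refine ⟨t, rfl, fun i => ?_⟩
        obtain ⟨w, hw1, hw2⟩ := G.assoc2 (ht i) (hv i)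
        rwa [G.cancel_right _ w (u i) (b i) hw2 (hu i)] at hw1
    -- LRR
    · rw [kadd_rr G l r] at h2
      exact nomatch h2
    -- RLL
    · obtain ⟨u, rfl, hu⟩ := (kadd_rl G l r).mp h1
      obtain ⟨s, rfl, hs⟩ := (kadd_ll G l r).mp h2
      apply option_ext'
      intro z
      rw [kadd_rl G l r, kadd_rl G l r]
      constructor
      · rintro ⟨t, rfl, ht⟩
        refine ⟨t, rfl, fun i => ?_⟩
        rw [G.assoc_eq (g (r.symm i)) (h (r.symm i)) (t i) (s (r.symm i)) (u i)
          (hs (r.symm i)) (ht i)]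
        exact hu i
      · rintro ⟨t, rfl, ht⟩
        refine ⟨t, rfl, fun i => ?_⟩
        obtain ⟨w, hw1, hw2⟩ := G.assoc1 (hs (r.symm i)) (ht i)
        rwa [G.cancel_left _ w (u i) (a i) hw2 (hu i)] at hw1
    -- RLR
    · obtain ⟨u, rfl, -⟩ := (kadd_rl G l r).mp h1
      obtain ⟨v, rfl, -⟩ := (kadd_lr G l r).mp h2
      rw [kadd_rr G l r, kadd_rr G l r]
    -- RRL
    · rw [kadd_rr G l r] at h1
      exact nomatch h1
    -- RRR
    · rw [kadd_rr G l r] at h1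
      exact nomatch h1
  -- right complement
  · rintro (f | a)
    · refine ⟨Sum.inr fun i => f (l.symm i), ?_, ?_⟩
      · exact (kadd_lr G l r).mpr ⟨fun _ => G.zero, rfl, fun i => G.zero_add _⟩
      · rintro (g | b) hy
        · obtain ⟨s, hs, -⟩ := (kadd_ll G l r).mp hy
          exact absurd hs (by simp [kiteOne])
        · obtain ⟨u, hu0, hu⟩ := (kadd_lr G l r).mp hy
          have hu0' : (fun _ => G.zero : I → E) = u := by
            unfold kiteOne at hu0
            injection hu0
          refine congrArg Sum.inr (funext fun i => ?_)
          have h1 := hu i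
          rw [← hu0', G.zero_add] at h1
          exact (Option.some.inj h1).symm
    · refine ⟨Sum.inl fun j => a (r j), ?_, ?_⟩
      · refine (kadd_rl G l r).mpr ⟨fun _ => G.zero, rfl, fun i => ?_⟩
        simpa using G.add_zero (a i)
      · rintro (g | b) hy
        · obtain ⟨u, hu0, hu⟩ := (kadd_rl G l r).mp hy
          have hu0' : (fun _ => G.zero : I → E) = u := by
            unfold kiteOne at hu0
            injection hu0
          refine congrArg Sum.inl (funext fun j => ?_)
          have h1 := hu (r j)
          rw [← hu0', G.add_zero] at h1
          simpa using Option.some.inj h1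
        · rw [kadd_rr G l r] at hy
          exact nomatch hy
  -- left complement
  · rintro (f | a)
    · refine ⟨Sum.inr fun i => f (r.symm i), ?_, ?_⟩
      · exact (kadd_rl G l r).mpr ⟨fun _ => G.zero, rfl, fun i => G.add_zero _⟩
      · rintro (g | b) hy
        · obtain ⟨s, hs, -⟩ := (kadd_ll G l r).mp hy
          exact absurd hs (by simp [kiteOne])
        · obtain ⟨u, hu0, hu⟩ := (kadd_rl G l r).mp hy
          have hu0' : (fun _ => G.zero : I → E) = u := by
            unfold kiteOne at hu0
            injection hu0
          refine congrArg Sum.inr (funext fun i => ?_)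
          have h1 := hu i
          rw [← hu0', G.add_zero] at h1
          exact (Option.some.inj h1).symm
    · refine ⟨Sum.inl fun j => a (l j), ?_, ?_⟩
      · refine (kadd_lr G l r).mpr ⟨fun _ => G.zero, rfl, fun i => ?_⟩
        simpa using G.zero_add (a i)
      · rintro (g | b) hy
        · obtain ⟨u, hu0, hu⟩ := (kadd_lr G l r).mp hy
          have hu0' : (fun _ => G.zero : I → E) = u := by
            unfold kiteOne at hu0
            injection hu0
          refine congrArg Sum.inl (funext fun j => ?_)
          have h1 := hu (l j)
          rw [← hu0', G.zero_add] at h1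
          simpa using Option.some.inj h1
        · rw [kadd_rr G l r] at hy
          exact nomatch hy
  -- exchange
  · rintro (f | a) (g | b) ab hab
    · obtain ⟨s, rfl, hs⟩ := (kadd_ll G l r).mp hab
      constructor
      · choose d hd using fun j => (G.exch _ _ _ (hs j)).1
        exact ⟨Sum.inl d, (kadd_ll G l r).mpr ⟨s, rfl, hd⟩⟩
      · choose e he using fun j => (G.exch _ _ _ (hs j)).2
        exact ⟨Sum.inl e, (kadd_ll G l r).mpr ⟨s, rfl, he⟩⟩
    · obtain ⟨u, rfl, hu⟩ := (kadd_lr G l r).mp hab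
      constructor
      · have hdef : ∀ i, (G.add (f (r.symm i)) (u i)).isSome := fun i =>
          (hwc.1 f u i).mpr (by rw [hu i]; rfl)
        exact ⟨Sum.inr fun i => (G.add (f (r.symm i)) (u i)).get (hdef i),
          (kadd_rl G l r).mpr ⟨u, rfl, fun i => (Option.some_get (hdef i)).symm⟩⟩
      · choose e he using fun i => (G.exch _ _ _ (hu i)).1
        exact ⟨Sum.inl fun j => e (r j),
          (kadd_rl G l r).mpr ⟨u, rfl, fun i => by simpa using he i⟩⟩
    · obtain ⟨u, rfl, hu⟩ := (kadd_rl G l r).mp hab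
      constructor
      · choose d hd using fun i => (G.exch _ _ _ (hu i)).2
        exact ⟨Sum.inl fun j => d (l j),
          (kadd_lr G l r).mpr ⟨u, rfl, fun i => by simpa using hd i⟩⟩
      · have hdef : ∀ i, (G.add (u i) (g (l.symm i))).isSome := fun i =>
          (hwc.1 g u i).mp (by rw [hu i]; rfl)
        exact ⟨Sum.inr fun i => (G.add (u i) (g (l.symm i))).get (hdef i),
          (kadd_lr G l r).mpr ⟨u, rfl, fun i => (Option.some_get (hdef i)).symm⟩⟩
    · rw [kadd_rr G l r] at hab
      exact nomatch hab
  -- one_left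
  · rintro (f | a) h
    · rw [Option.isSome_iff_exists] at h
      obtain ⟨z, hz⟩ := h
      unfold kiteOne at hz
      obtain ⟨u, -, hu⟩ := (kadd_rl G l r).mp hz
      refine congrArg Sum.inl (funext fun j => ?_)
      have := (G.pos _ _ (hu (r j))).1
      simpa using this
    · exfalso
      have h0 : kiteAdd G l r (kiteOne E I G) (Sum.inr a) = none := kadd_rr G l r
      rw [h0] at h
      simp at h
  -- one_right
  · rintro (f | a) h
    · rw [Option.isSome_iff_exists] at h
      obtain ⟨z, hz⟩ := h
      unfold kiteOne at hz
      obtain ⟨u, -, hu⟩ := (kadd_lr G l r).mp hz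
      refine congrArg Sum.inl (funext fun j => ?_)
      have := (G.pos _ _ (hu (l j))).2
      simpa using this
    · exfalso
      have h0 : kiteAdd G l r (Sum.inr a) (kiteOne E I G) = none := kadd_rr G l r
      rw [h0] at h
      simp at h
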